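/- The capacity of the two-hop half-duplex relay channel with symmetric binary-symmetric links strictly exceeds the conventional relaying rate: for every ε ∈ [0, 1/2), sup over P ∈ [0,1] of min{ (1 − H(ε))·(1 − P), H(ε·(1 − 2P) + P) − H(ε) } > (1 − H(ε))/2. -/

import Mathlib

noncomputable def binH (p : ℝ) : ℝ :=
  -(p * Real.logb 2 p) - (1 - p) * Real.logb 2 (1 - p)

lemma binH_eq (p : ℝ) : binH p = Real.binEntropy p / Real.log 2 := by
  simp [binH, Real.binEntropy, Real.logb, Real.log_inv]
  ring

lemma binH_half : binH (1/2) = 1 := by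
  rw [binH_eq, show (1/2:ℝ) = 2⁻¹ by norm_num, Real.binEntropy_two_inv]
  exact div_self (ne_of_gt (Real.log_pos one_lt_two))

lemma binH_lt_one {p : ℝ} (hp : p ≠ 1/2) : binH p < 1 := by
  rw [binH_eq, div_lt_one (Real.log_pos one_lt_two)]
  exact Real.binEntropy_lt_log_two.2 (by rwa [show (2:ℝ)⁻¹ = 1/2 by norm_num])

lemma binH_nonneg {p : ℝ} (h0 : 0 ≤ p) (h1 : p ≤ 1) : 0 ≤ binH p := by
  rw [binH_eq]
  exact div_nonneg (Real.binEntropy_nonneg h0 h1) (Real.log_pos one_lt_two).le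

lemma binH_continuous : Continuous binH := by
  simp only [funext binH_eq]
  exact Real.binEntropy_continuous.div_const _

/-- for symmetric binary-symmetric links with crossover probability
`ε ∈ [0, 1/2)`, the capacity of the two-hop half-duplex relay channel,
`sup_{P ∈ [0,1]} min{ (1 − H(ε))·(1 − P), H(ε·(1 − 2P) + P) − H(ε) }`,
strictly exceeds the conventional relaying rate `(1 − H(ε))/2`. -/
theorem capacity_BSC_exceeds_conventional (ε : ℝ) (hε : ε ∈ Set.Ico (0:ℝ) (1/2)) :
    (1 - binH ε) / 2 <
      sSup {r : ℝ | ∃ P ∈ Set.Icc (0:ℝ) 1,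
        r = min ((1 - binH ε) * (1 - P)) (binH (ε * (1 - 2 * P) + P) - binH ε)} := by
  obtain ⟨hε0, hε2⟩ := hε
  have hHlt : binH ε < 1 := binH_lt_one (by linarith)
  have hH0 : 0 ≤ binH ε := binH_nonneg hε0 (by linarith)
  set S := {r : ℝ | ∃ P ∈ Set.Icc (0:ℝ) 1,
        r = min ((1 - binH ε) * (1 - P)) (binH (ε * (1 - 2 * P) + P) - binH ε)} with hS
  have hbdd : BddAbove S := by
    refine ⟨1 - binH ε, ?_⟩
    rintro r ⟨P, ⟨hP0, hP1⟩, rfl⟩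
    refine le_trans (min_le_left _ _) ?_
    nlinarith
  -- continuity argument to find a good P < 1/2
  have hgc : ContinuousAt (fun P : ℝ => binH (ε * (1 - 2 * P) + P) - binH ε) (1/2) := by
    exact (binH_continuous.comp (by continuity)).continuousAt.sub continuousAt_const
  have hgval : (fun P : ℝ => binH (ε * (1 - 2 * P) + P) - binH ε) (1/2) = 1 - binH ε := by
    norm_num [binH_half]
  have hev : ∀ᶠ P in nhdsWithin (1/2 : ℝ) (Set.Iio (1/2)),
      (1 - binH ε) / 2 < binH (ε * (1 - 2 * P) + P) - binH ε := by
    have h1 : (1 - binH ε) / 2 < 1 - binH ε := by linarith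
    have := continuousAt_const.eventually_lt hgc (by show (1 - binH ε)/2 < _; norm_num [binH_half]; linarith)
    exact nhdsWithin_le_nhds (by filter_upwards [this] with P hP using hP)
  have hev2 : ∀ᶠ P in nhdsWithin (1/2 : ℝ) (Set.Iio (1/2)), (0:ℝ) < P := by
    refine nhdsWithin_le_nhds ?_
    exact Filter.Tendsto.eventually_const_lt (by norm_num) Filter.tendsto_id
  have hev3 : ∀ᶠ P in nhdsWithin (1/2 : ℝ) (Set.Iio (1/2)), P < 1/2 :=
    eventually_mem_nhdsWithin.mono (fun P hP => hP)
  obtain ⟨P, ⟨hg, hP0⟩, hPlt⟩ := ((hev.and hev2).and hev3).exists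
  have hmem : min ((1 - binH ε) * (1 - P)) (binH (ε * (1 - 2 * P) + P) - binH ε) ∈ S :=
    ⟨P, ⟨hP0.le, by linarith⟩, rfl⟩
  refine lt_of_lt_of_le ?_ (le_csSup hbdd hmem)
  refine lt_min ?_ hg
  nlinarith
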